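/- Sigma types preserve joins of maps: let f : A → X and g : B → X be functions between types and P : X → Type a type family. Let A ×_X B = Σ (a : A)(b : B), f a = g b be the pullback, let A ⋆_X B be the pushout of the two projections A ×_X B → A and A ×_X B → B (the join of f and g), and let f ⋆ g : A ⋆_X B → X be the induced map. Then Σ (w : A ⋆_X B), P((f ⋆ g) w) is the join over Σ (x : X), P x of the maps Σf : Σ (a : A), P(f a) → Σ (x : X), P x and Σg : Σ (b : B), P(g b) → Σ (x : X), P x; that is, the square with vertices the pullback of Σf and Σg, the types Σ (a : A), P(f a) and Σ (b : B), P(g b), and the type Σ (w : A ⋆_X B), P((f ⋆ g) w), with the canonical maps, is a pushout square in the category of types. -/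

import Mathlib

universe u

/-- `i : A → C` and `j : B → C` exhibit `C` as the (set-level) pushout of `f : X → A` and
`g : X → B` in the category of types. -/
def IsTypePushout {X A B C : Type u} (f : X → A) (g : X → B) (i : A → C) (j : B → C) : Prop :=
  (∀ x, i (f x) = j (g x)) ∧
    ∀ (Z : Type u) (u : A → Z) (v : B → Z), (∀ x, u (f x) = v (g x)) →
      ∃! w : C → Z, (∀ a, w (i a) = u a) ∧ (∀ b, w (j b) = v b)

private lemma sigma_snd_app' {J : Type u} {Q : J → Type u} {Z : Type u}
    {s t : Σ w : J, (Q w → Z)} (e : s = t) (p : Q s.1) :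
    s.2 p = t.2 (cast (congrArg Q (congrArg Sigma.fst e)) p) := by
  subst e; rfl

/-- Sigma types preserve joins of maps: let `f : A → X`, `g : B → X`, let `J = A ⋆_X B` be the
join of `f` and `g`, i.e. the pushout (with structure maps `inl`, `inr`) of the two projections
of the pullback `A ×_X B = Σ (a : A) (b : B), f a = g b`, and let `fg : J → X` be the induced
map (`fg ∘ inl = f`, `fg ∘ inr = g`).  Then for any type family `P : X → Type`, the total space
`Σ (w : J), P (fg w)` is the join over `Σ (x : X), P x` of the maps
`Σf : Σ (a : A), P (f a) → Σ (x : X), P x` and `Σg : Σ (b : B), P (g b) → Σ (x : X), P x`: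
the square formed by the pullback of `Σf` and `Σg`, the two total spaces, and
`Σ (w : J), P (fg w)`, with the canonical maps, is a pushout square of types. -/
theorem sigma_preserves_join {A B X J : Type u} (f : A → X) (g : B → X)
    (inl : A → J) (inr : B → J)
    (hpo : IsTypePushout (fun w : {w : A × B // f w.1 = g w.2} => w.1.1)
      (fun w : {w : A × B // f w.1 = g w.2} => w.1.2) inl inr)
    (fg : J → X) (hinl : ∀ a, fg (inl a) = f a) (hinr : ∀ b, fg (inr b) = g b)
    (P : X → Type u) :
    IsTypePushout
      (fun q : {q : (Σ a : A, P (f a)) × (Σ b : B, P (g b)) //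
          (⟨f q.1.1, q.1.2⟩ : Σ x : X, P x) = ⟨g q.2.1, q.2.2⟩} => q.1.1)
      (fun q : {q : (Σ a : A, P (f a)) × (Σ b : B, P (g b)) //
          (⟨f q.1.1, q.1.2⟩ : Σ x : X, P x) = ⟨g q.2.1, q.2.2⟩} => q.1.2)
      (fun ap : Σ a : A, P (f a) =>
        (⟨inl ap.1, cast (congrArg P (hinl ap.1).symm) ap.2⟩ : Σ w : J, P (fg w)))
      (fun bp : Σ b : B, P (g b) =>
        (⟨inr bp.1, cast (congrArg P (hinr bp.1).symm) bp.2⟩ : Σ w : J, P (fg w))) := by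
  obtain ⟨hglue, hup⟩ := hpo
  constructor
  · rintro ⟨⟨⟨a, p⟩, ⟨b, q⟩⟩, hq⟩
    obtain ⟨hab, hpq⟩ := Sigma.mk.inj_iff.mp hq
    have hJ : inl a = inr b := hglue ⟨(a, b), hab⟩
    dsimp only
    refine Sigma.ext hJ ?_
    exact (cast_heq _ p).trans (hpq.trans (cast_heq _ q).symm)
  · intro Z u v huv
    -- The auxiliary cocone into `Σ w : J, (P (fg w) → Z)`.
    let U : A → Σ w : J, (P (fg w) → Z) :=
      fun a => ⟨inl a, fun p => u ⟨a, cast (congrArg P (hinl a)) p⟩⟩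
    let V : B → Σ w : J, (P (fg w) → Z) :=
      fun b => ⟨inr b, fun p => v ⟨b, cast (congrArg P (hinr b)) p⟩⟩
    have hcompat : ∀ x : {w : A × B // f w.1 = g w.2}, U x.1.1 = V x.1.2 := by
      rintro ⟨⟨a, b⟩, hab⟩
      have hJ : inl a = inr b := hglue ⟨(a, b), hab⟩
      show U a = V b
      dsimp only [U, V]
      refine Sigma.ext hJ ?_
      refine Function.hfunext (congrArg (fun t => P (fg t)) hJ) ?_
      intro p p' hpp'
      have hsig : (⟨f a, cast (congrArg P (hinl a)) p⟩ : Σ x : X, P x)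
          = ⟨g b, cast (congrArg P (hinr b)) p'⟩ := by
        refine Sigma.ext hab ?_
        exact (cast_heq _ p).trans (hpp'.trans (cast_heq _ p').symm)
      have := huv ⟨(⟨a, cast (congrArg P (hinl a)) p⟩, ⟨b, cast (congrArg P (hinr b)) p'⟩), hsig⟩
      exact heq_of_eq this
    obtain ⟨W, ⟨hWl, hWr⟩, hWuniq⟩ :=
      hup (Σ w : J, (P (fg w) → Z)) U V hcompat
    -- The first component of `W` is the identity, by uniqueness.
    obtain ⟨idJ, -, hidu⟩ := hup J inl inr hglue
    have h1 : ∀ w, (W w).1 = w := by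
      have e1 : (fun w => (W w).1) = idJ := by
        refine hidu _ ⟨fun a => ?_, fun b => ?_⟩
        · show (W (inl a)).1 = inl a; rw [hWl a]
        · show (W (inr b)).1 = inr b; rw [hWr b]
      have e2 : (fun w : J => w) = idJ := hidu _ ⟨fun a => rfl, fun b => rfl⟩
      intro w
      exact (congrFun (e1.trans e2.symm) w)
    -- The candidate map.
    refine ⟨fun wp => (W wp.1).2 (cast (congrArg (fun t => P (fg t)) (h1 wp.1).symm) wp.2),
      ⟨?_, ?_⟩, ?_⟩
    · rintro ⟨a, p⟩
      dsimp only
      rw [sigma_snd_app' (hWl a)]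
      show u ⟨a, cast _ (cast _ (cast _ (cast _ p)))⟩ = u ⟨a, p⟩
      simp [cast_cast]
    · rintro ⟨b, p⟩
      dsimp only
      rw [sigma_snd_app' (hWr b)]
      show v ⟨b, cast _ (cast _ (cast _ (cast _ p)))⟩ = v ⟨b, p⟩
      simp [cast_cast]
    · rintro w'' ⟨hu'', hv''⟩
      let W'' : J → Σ w : J, (P (fg w) → Z) := fun w => ⟨w, fun p => w'' ⟨w, p⟩⟩
      have hW'' : W'' = W := by
        refine hWuniq W'' ⟨fun a => ?_, fun b => ?_⟩
        · refine Sigma.ext rfl (heq_of_eq (funext fun p => ?_))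
          have := hu'' ⟨a, cast (congrArg P (hinl a)) p⟩
          dsimp only at this ⊢
          rw [show cast (congrArg P (hinl a).symm) (cast (congrArg P (hinl a)) p) = p by
            simp [cast_cast]] at this
          exact this
        · refine Sigma.ext rfl (heq_of_eq (funext fun p => ?_))
          have := hv'' ⟨b, cast (congrArg P (hinr b)) p⟩
          dsimp only at this ⊢
          rw [show cast (congrArg P (hinr b).symm) (cast (congrArg P (hinr b)) p) = p by
            simp [cast_cast]] at this
          exact this
      funext wp
      obtain ⟨w, p⟩ := wp
      have : w'' ⟨w, p⟩ = (W'' w).2 p := rfl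
      rw [this, sigma_snd_app' (congrFun hW'' w)]
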